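/- For the normal location model p(x) = (1/√(2π))e^{−x²/2}, the function x ↦ (p(x−α)/p(x−θ₀))^γ · (x−θ₀) is unbounded on ℝ for every γ ∈ ℝ and every α ≠ θ₀ as well as for α = θ₀; consequently no dual φ_γ-divergence estimator of the normal mean is B-robust. -/
import Mathlib


open Real

/-- For the normal location model `p(x) = (1/√(2π))·exp(−x²/2)`, the weighted score
`x ↦ (p(x−α)/p(x−θ₀))^γ · (x−θ₀)` is unbounded on `ℝ` for every `γ, α, θ₀`; hence no
dual `φ_γ`-divergence estimator of the normal mean is B-robust. -/
theorem normal_location_weighted_score_unbounded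
    (p : ℝ → ℝ) (hp : ∀ x, p x = (1 / Real.sqrt (2 * π)) * Real.exp (-x ^ 2 / 2)) :
    ∀ γ α θ₀ : ℝ, ¬ ∃ M : ℝ, ∀ x : ℝ,
      |(p (x - α) / p (x - θ₀)) ^ γ * (x - θ₀)| ≤ M := by
  intro γ α θ₀
  rintro ⟨M, hM⟩
  set c : ℝ := γ * (α - θ₀) with hc
  set d : ℝ := c * (θ₀ - α) / 2 with hd
  have hsqrt : 0 < Real.sqrt (2 * π) := Real.sqrt_pos.mpr (by positivity)
  have key : ∀ s : ℝ, (p (θ₀ + s - α) / p (θ₀ + s - θ₀)) ^ γ = Real.exp (c * s + d) := by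
    intro s
    rw [hp, hp]
    have h1 : (1 / Real.sqrt (2 * π)) * Real.exp (-(θ₀ + s - α) ^ 2 / 2) /
        ((1 / Real.sqrt (2 * π)) * Real.exp (-(θ₀ + s - θ₀) ^ 2 / 2))
        = Real.exp (-(θ₀ + s - α) ^ 2 / 2 - (-(θ₀ + s - θ₀) ^ 2 / 2)) := by
      rw [Real.exp_sub]
      have := Real.exp_pos (-(θ₀ + s - θ₀) ^ 2 / 2)
      field_simp
    rw [h1, Real.rpow_def_of_pos (Real.exp_pos _), Real.log_exp]
    congr 1
    simp only [hc, hd]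
    ring
  set t : ℝ := max 1 ((|M| + 1) * Real.exp (-d)) with ht
  have ht1 : (1 : ℝ) ≤ t := le_max_left _ _
  have ht0 : 0 < t := lt_of_lt_of_le one_pos ht1
  set s : ℝ := if 0 ≤ c then t else -t with hs
  have hcs : 0 ≤ c * s := by
    by_cases h : 0 ≤ c
    · simp only [hs, if_pos h]; positivity
    · simp only [hs, if_neg h]
      push_neg at h
      nlinarith
  have habs : |s| = t := by
    by_cases h : 0 ≤ c
    · simp [hs, if_pos h, abs_of_pos ht0]
    · simp [hs, if_neg h, abs_of_pos ht0]
  have hval := hM (θ₀ + s)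
  rw [key s] at hval
  have heq : θ₀ + s - θ₀ = s := by ring
  rw [heq, abs_mul, Real.abs_exp, habs] at hval
  have h2 : Real.exp d * ((|M| + 1) * Real.exp (-d)) ≤ Real.exp (c * s + d) * t := by
    apply mul_le_mul
    · exact Real.exp_le_exp.mpr (by linarith)
    · exact le_max_right _ _
    · positivity
    · positivity
  rw [show Real.exp d * ((|M| + 1) * Real.exp (-d)) = (|M| + 1) * (Real.exp d * Real.exp (-d)) by
    ring, ← Real.exp_add, add_neg_cancel, Real.exp_zero, mul_one] at h2
  have : |M| + 1 ≤ M := le_trans h2 hval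
  have := le_abs_self M
  linarith
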